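/- arXiv:2402.12017 — 2 statements merged into one kernel-verified Lean document; each statement's English description precedes it below -/
import Mathlib

section
/- Let M = ([n], 𝓘) be a matroid. A partition of [n] into t pairwise disjoint independent sets I₁, …, I_t ∈ 𝓘 exists if and only if for every subset S ⊆ [n], |S| ≤ t · rank(S). -/
open Finset
open scoped Classical

variable {n : ℕ}

/-- The list of indices sorted in nonincreasing order of weight,
breaking ties in favor of lower indices. -/
noncomputable def sortedList (n : ℕ) (w : Fin n → ℝ) : List (Fin n) :=
  (List.finRange n).mergeSort (fun a b => decide (w b < w a ∨ (w a = w b ∧ a ≤ b)))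

/-- Greedy: process the list in order, adding an element whenever independence is kept. -/
noncomputable def greedyAux (Indep : Finset (Fin n) → Prop) :
    List (Fin n) → Finset (Fin n) → Finset (Fin n)
  | [], I => I
  | a :: l, I => greedyAux Indep l (if Indep (insert a I) then insert a I else I)

/-- The greedy algorithm on a matroid with weights `w`. -/
noncomputable def greedy (Indep : Finset (Fin n) → Prop) (w : Fin n → ℝ) : Finset (Fin n) :=
  greedyAux Indep (sortedList n w) ∅

/-- The matroid rank function. -/
noncomputable def rank (Indep : Finset (Fin n) → Prop) (S : Finset (Fin n)) : ℕ :=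
  (S.powerset.filter Indep).sup Finset.card

section Basics
variable (Indep : Finset (Fin n) → Prop)

lemma card_le_rank {A S : Finset (Fin n)} (hA : Indep A) (hAS : A ⊆ S) :
    A.card ≤ rank Indep S :=
  Finset.le_sup (by simp [Finset.mem_filter, Finset.mem_powerset, hAS, hA])

lemma rank_mono {S T : Finset (Fin n)} (h : S ⊆ T) : rank Indep S ≤ rank Indep T := by
  apply Finset.sup_le
  intro A hA
  simp only [Finset.mem_filter, Finset.mem_powerset] at hA
  exact card_le_rank Indep hA.2 (hA.1.trans h)

lemma rank_le_card' (S : Finset (Fin n)) : rank Indep S ≤ S.card := by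
  apply Finset.sup_le
  intro A hA
  simp only [Finset.mem_filter, Finset.mem_powerset] at hA
  exact Finset.card_le_card hA.1

lemma exists_basis (hEmpty : Indep ∅) (S : Finset (Fin n)) :
    ∃ B, B ⊆ S ∧ Indep B ∧ B.card = rank Indep S := by
  have hne : (S.powerset.filter Indep).Nonempty :=
    ⟨∅, by simp [Finset.mem_filter, hEmpty]⟩
  obtain ⟨B, hB, hBc⟩ := Finset.exists_mem_eq_sup _ hne Finset.card
  simp only [Finset.mem_filter, Finset.mem_powerset] at hB
  exact ⟨B, hB.1, hB.2, hBc.symm⟩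

lemma rank_of_indep {K : Finset (Fin n)} (hK : Indep K) : rank Indep K = K.card :=
  le_antisymm (rank_le_card' Indep K) (card_le_rank Indep hK (Finset.Subset.refl K))

end Basics

section Exchange
variable (Indep : Finset (Fin n) → Prop)
  (hEmpty : Indep ∅)
  (hDown : ∀ A B : Finset (Fin n), A ⊆ B → Indep B → Indep A)
  (hExch : ∀ A B : Finset (Fin n), Indep A → Indep B → A.card < B.card →
      ∃ x ∈ B, x ∉ A ∧ Indep (insert x A))

include hEmpty hExch in
lemma extend_to_basis {I S : Finset (Fin n)} (hI : Indep I) (hIS : I ⊆ S) :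
    ∃ J, I ⊆ J ∧ J ⊆ S ∧ Indep J ∧ J.card = rank Indep S := by
  obtain ⟨k, hk⟩ : ∃ k, rank Indep S ≤ I.card + k := ⟨rank Indep S, by omega⟩
  induction k generalizing I with
  | zero =>
    exact ⟨I, Finset.Subset.refl I, hIS, hI,
      le_antisymm (card_le_rank Indep hI hIS) (by omega)⟩
  | succ k ih =>
    by_cases hle : rank Indep S ≤ I.card
    · exact ⟨I, Finset.Subset.refl I, hIS, hI,
        le_antisymm (card_le_rank Indep hI hIS) hle⟩
    · obtain ⟨B, hBS, hBind, hBcard⟩ := exists_basis Indep hEmpty S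
      obtain ⟨x, hxB, hxI, hxind⟩ := hExch I B hI hBind (by omega)
      obtain ⟨J, hIJ, hJS, hJind, hJcard⟩ := ih hxind
        (Finset.insert_subset (hBS hxB) hIS)
        (by rw [Finset.card_insert_of_notMem hxI]; omega)
      exact ⟨J, (Finset.subset_insert x I).trans hIJ, hJS, hJind, hJcard⟩

include hEmpty hDown hExch in
lemma rank_submodular (A B : Finset (Fin n)) :
    rank Indep (A ∪ B) + rank Indep (A ∩ B) ≤ rank Indep A + rank Indep B := by
  obtain ⟨I, hIAB, hIind, hIcard⟩ := exists_basis Indep hEmpty (A ∩ B)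
  obtain ⟨J, hIJ, hJAB, hJind, hJcard⟩ := extend_to_basis Indep hEmpty hExch hIind
    (hIAB.trans (Finset.inter_subset_union))
  have hJA : (J ∩ A).card ≤ rank Indep A :=
    card_le_rank Indep (hDown _ _ Finset.inter_subset_left hJind) Finset.inter_subset_right
  have hJB : (J ∩ B).card ≤ rank Indep B :=
    card_le_rank Indep (hDown _ _ Finset.inter_subset_left hJind) Finset.inter_subset_right
  have hU : (J ∩ A) ∪ (J ∩ B) = J := by
    rw [← Finset.inter_union_distrib_left]
    exact Finset.inter_eq_left.mpr hJAB
  have hI2 : (J ∩ A) ∩ (J ∩ B) = J ∩ (A ∩ B) := by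
    ext x; simp only [Finset.mem_inter]; tauto
  have hci : (J ∩ (A ∩ B)).card = rank Indep (A ∩ B) := by
    refine le_antisymm (card_le_rank Indep (hDown _ _ Finset.inter_subset_left hJind)
      Finset.inter_subset_right) ?_
    rw [← hIcard]
    exact Finset.card_le_card (Finset.subset_inter hIJ hIAB)
  have hkey := Finset.card_union_add_card_inter (J ∩ A) (J ∩ B)
  rw [hU, hI2, hci, hJcard] at hkey
  omega

include hEmpty hDown in
lemma rank_insert_le (e : Fin n) (S : Finset (Fin n)) :
    rank Indep (insert e S) ≤ rank Indep S + 1 := by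
  obtain ⟨B, hBS, hBind, hBcard⟩ := exists_basis Indep hEmpty (insert e S)
  have h1 : B.erase e ⊆ S := by
    intro x hx
    have := hBS (Finset.mem_of_mem_erase hx)
    rcases Finset.mem_insert.mp this with h | h
    · exact absurd h (Finset.ne_of_mem_erase hx)
    · exact h
  have h2 : (B.erase e).card ≤ rank Indep S :=
    card_le_rank Indep (hDown _ _ (Finset.erase_subset e B) hBind) h1
  by_cases he : e ∈ B
  · have := Finset.card_erase_of_mem he
    omega
  · rw [Finset.erase_eq_of_notMem he] at h2; omega

include hEmpty hDown hExch in
lemma rank_insert_eq_of_subset {e : Fin n} {D D' : Finset (Fin n)} (hDD' : D ⊆ D')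
    (h : rank Indep (insert e D) = rank Indep D) :
    rank Indep (insert e D') = rank Indep D' := by
  have hsub := rank_submodular Indep hEmpty hDown hExch (insert e D) D'
  have h1 : insert e D ∪ D' = insert e D' := by
    rw [Finset.insert_union, Finset.union_eq_right.mpr hDD']
  have h2 : rank Indep D ≤ rank Indep (insert e D ∩ D') :=
    rank_mono Indep (Finset.subset_inter ((Finset.subset_insert e D)) hDD')
  have h3 : rank Indep D' ≤ rank Indep (insert e D') :=
    rank_mono Indep (Finset.subset_insert e D')
  rw [h1, h] at hsub
  omega

end Exchange

lemma main_lemma (Indep : Finset (Fin n) → Prop)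
    (hEmpty : Indep ∅)
    (hDown : ∀ A B : Finset (Fin n), A ⊆ B → Indep B → Indep A)
    (hExch : ∀ A B : Finset (Fin n), Indep A → Indep B → A.card < B.card →
      ∃ x ∈ B, x ∉ A ∧ Indep (insert x A))
    (t : ℕ) :
    ∀ (m : ℕ) (E : Finset (Fin n)) (K : Fin t → Finset (Fin n)), E.card ≤ m →
      (∀ i, Indep (K i)) →
      (∀ i j, i ≠ j → Disjoint (K i) (K j)) →
      (∀ i, Disjoint E (K i)) →
      (∀ S, S ⊆ E → S.card + ∑ i, (K i).card ≤ ∑ i, rank Indep (S ∪ K i)) →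
      ∃ P : Fin t → Finset (Fin n), (∀ i, P i ⊆ E) ∧ (∀ i, Indep (P i ∪ K i)) ∧
        (∀ i j, i ≠ j → Disjoint (P i) (P j)) ∧ E ⊆ Finset.univ.biUnion P := by
  intro m
  induction m with
  | zero =>
    intro E K hEm _ _ _ _
    have hE : E = ∅ := Finset.card_eq_zero.mp (Nat.le_zero.mp hEm)
    subst hE
    exact ⟨fun _ => ∅, fun _ => Finset.empty_subset _,
      fun i => by simpa using ‹∀ i, Indep (K i)› i,
      fun _ _ _ => Finset.disjoint_empty_left _, Finset.empty_subset _⟩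
  | succ m ih =>
    intro E K hEm hK hKd hEK hCond
    rcases E.eq_empty_or_nonempty with rfl | ⟨e, he⟩
    · exact ⟨fun _ => ∅, fun _ => Finset.empty_subset _,
        fun i => by simpa using hK i,
        fun _ _ _ => Finset.disjoint_empty_left _, Finset.empty_subset _⟩
    set E' := E.erase e with hE'
    have heE' : e ∉ E' := Finset.notMem_erase e E
    have hE'E : E' ⊆ E := Finset.erase_subset e E
    set sK := ∑ i, (K i).card with hsK
    -- tight sets family
    set 𝒯 := E'.powerset.filter
      (fun S => ∑ i, rank Indep (S ∪ K i) ≤ S.card + sK) with h𝒯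
    have h𝒯ne : 𝒯.Nonempty := by
      refine ⟨∅, ?_⟩
      simp only [h𝒯, Finset.mem_filter, Finset.mem_powerset]
      constructor
      · exact Finset.empty_subset _
      · have hrk : ∑ i : Fin t, rank Indep (∅ ∪ K i) = ∑ i : Fin t, (K i).card := by
          apply Finset.sum_congr rfl
          intro i _
          rw [Finset.empty_union]; exact rank_of_indep Indep (hK i)
        rw [hrk, hsK]
        simp
    obtain ⟨D, hD𝒯, hDmax⟩ := Finset.exists_max_image 𝒯 Finset.card h𝒯ne
    have hDE' : D ⊆ E' := by
      have := hD𝒯; simp only [h𝒯, Finset.mem_filter, Finset.mem_powerset] at this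
      exact this.1
    have hDle : ∑ i, rank Indep (D ∪ K i) ≤ D.card + sK := by
      have := hD𝒯; simp only [h𝒯, Finset.mem_filter, Finset.mem_powerset] at this
      exact this.2
    have hDtight : ∑ i, rank Indep (D ∪ K i) = D.card + sK :=
      le_antisymm hDle (hCond D (hDE'.trans hE'E))
    -- all tight sets are contained in D
    have hsub : ∀ S, S ⊆ E' → (∑ i, rank Indep (S ∪ K i) ≤ S.card + sK) → S ⊆ D := by
      intro S hSE' hStight
      have hsubmod : ∀ i : Fin t,
          rank Indep ((S ∪ D) ∪ K i) + rank Indep ((S ∩ D) ∪ K i)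
            ≤ rank Indep (S ∪ K i) + rank Indep (D ∪ K i) := by
        intro i
        have h1 : (S ∪ K i) ∪ (D ∪ K i) = (S ∪ D) ∪ K i := by
          ext x; simp only [Finset.mem_union]; tauto
        have h2 : (S ∪ K i) ∩ (D ∪ K i) = (S ∩ D) ∪ K i := by
          ext x; simp only [Finset.mem_union, Finset.mem_inter]; tauto
        have := rank_submodular Indep hEmpty hDown hExch (S ∪ K i) (D ∪ K i)
        rwa [h1, h2] at this
      have hsum : ∑ i, rank Indep ((S ∪ D) ∪ K i) + ∑ i, rank Indep ((S ∩ D) ∪ K i)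
          ≤ (∑ i, rank Indep (S ∪ K i)) + ∑ i, rank Indep (D ∪ K i) := by
        rw [← Finset.sum_add_distrib, ← Finset.sum_add_distrib]
        exact Finset.sum_le_sum (fun i _ => hsubmod i)
      have hinter : (S ∩ D).card + sK ≤ ∑ i, rank Indep ((S ∩ D) ∪ K i) :=
        hCond _ ((Finset.inter_subset_left).trans (hSE'.trans hE'E))
      have hcard := Finset.card_union_add_card_inter S D
      have hUt : ∑ i, rank Indep ((S ∪ D) ∪ K i) ≤ (S ∪ D).card + sK := by omega
      have hUmem : S ∪ D ∈ 𝒯 := by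
        simp only [h𝒯, Finset.mem_filter, Finset.mem_powerset]
        exact ⟨Finset.union_subset hSE' hDE', hUt⟩
      have := hDmax _ hUmem
      have hEq : D = S ∪ D :=
        Finset.eq_of_subset_of_card_le Finset.subset_union_right this
      intro x hx
      rw [hEq]; exact Finset.mem_union_left D hx
    -- find the good index i
    have hTE : insert e D ⊆ E := Finset.insert_subset he (hDE'.trans hE'E)
    have heD : e ∉ D := fun h => heE' (hDE' h)
    have hcondT := hCond (insert e D) hTE
    rw [Finset.card_insert_of_notMem heD] at hcondT
    have hTins : ∀ i : Fin t, (insert e D) ∪ K i = insert e (D ∪ K i) := by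
      intro i; rw [Finset.insert_union]
    have hlt : ∑ i, rank Indep (D ∪ K i) < ∑ i, rank Indep (insert e (D ∪ K i)) := by
      have : ∑ i, rank Indep ((insert e D) ∪ K i)
          = ∑ i, rank Indep (insert e (D ∪ K i)) := by
        apply Finset.sum_congr rfl; intro i _; rw [hTins i]
      omega
    obtain ⟨i, _, hi⟩ := Finset.exists_lt_of_sum_lt hlt
    have hi2 : rank Indep (insert e (D ∪ K i)) = rank Indep (D ∪ K i) + 1 := by
      have := rank_insert_le Indep hEmpty hDown e (D ∪ K i)
      omega
    have heKj : ∀ j, e ∉ K j := fun j h => (Finset.disjoint_left.mp (hEK j) he) h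
    -- Indep (insert e (K i))
    have hKie : Indep (insert e (K i)) := by
      have h5 : rank Indep (insert e (K i)) = rank Indep (K i) + 1 := by
        by_contra h5
        have hle := rank_insert_le Indep hEmpty hDown e (K i)
        have hge := rank_mono Indep (Finset.subset_insert e (K i))
        have heq : rank Indep (insert e (K i)) = rank Indep (K i) := by omega
        have := rank_insert_eq_of_subset Indep hEmpty hDown hExch
          (Finset.subset_union_right : K i ⊆ D ∪ K i) heq
        omega
      rw [rank_of_indep Indep (hK i)] at h5
      obtain ⟨B, hBsub, hBind, hBcard⟩ := exists_basis Indep hEmpty (insert e (K i))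
      have : B = insert e (K i) := by
        apply Finset.eq_of_subset_of_card_le hBsub
        rw [Finset.card_insert_of_notMem (heKj i), hBcard, h5]
      rwa [this] at hBind
    -- new K family
    set K' : Fin t → Finset (Fin n) := fun j => if j = i then insert e (K i) else K j
      with hK'def
    have hK'i : K' i = insert e (K i) := by simp [hK'def]
    have hK'j : ∀ j, j ≠ i → K' j = K j := fun j hj => by simp [hK'def, hj]
    have hsplit : ∀ f : Fin t → ℕ, ∑ j, f j = f i + ∑ j ∈ Finset.univ.erase i, f j :=
      fun f => (Finset.add_sum_erase _ f (Finset.mem_univ i)).symm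
    have hK'ind : ∀ j, Indep (K' j) := by
      intro j
      by_cases hj : j = i
      · rw [hj, hK'i]; exact hKie
      · rw [hK'j j hj]; exact hK j
    have hK'd : ∀ j l, j ≠ l → Disjoint (K' j) (K' l) := by
      intro j l hjl
      by_cases hj : j = i
      · have hl : l ≠ i := fun h => hjl (hj.trans h.symm)
        rw [hj, hK'i, hK'j l hl, Finset.disjoint_insert_left]
        exact ⟨heKj l, hKd i l (fun h => hl (h.symm ▸ rfl))⟩
      · by_cases hl : l = i
        · rw [hl, hK'i, hK'j j hj, Finset.disjoint_insert_right]
          exact ⟨heKj j, hKd j i hj⟩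
        · rw [hK'j j hj, hK'j l hl]; exact hKd j l hjl
    have hE'K' : ∀ j, Disjoint E' (K' j) := by
      intro j
      by_cases hj : j = i
      · rw [hj, hK'i, Finset.disjoint_insert_right]
        exact ⟨heE', Finset.disjoint_of_subset_left hE'E (hEK i)⟩
      · rw [hK'j j hj]; exact Finset.disjoint_of_subset_left hE'E (hEK j)
    have hsK' : ∑ j, (K' j).card = sK + 1 := by
      have e1 := hsplit (fun j => (K' j).card)
      have e2 := hsplit (fun j => (K j).card)
      have h1 : (K' i).card = (K i).card + 1 := by
        rw [hK'i, Finset.card_insert_of_notMem (heKj i)]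
      have h2 : ∑ j ∈ Finset.univ.erase i, (K' j).card
          = ∑ j ∈ Finset.univ.erase i, (K j).card :=
        Finset.sum_congr rfl (fun j hj => by rw [hK'j j (Finset.ne_of_mem_erase hj)])
      omega
    have hCond' : ∀ S, S ⊆ E' → S.card + ∑ j, (K' j).card ≤ ∑ j, rank Indep (S ∪ K' j) := by
      intro S hS
      rw [hsK']
      have hc := hCond S (hS.trans hE'E)
      have hsplitK' : ∑ j, rank Indep (S ∪ K' j)
          = rank Indep (insert e (S ∪ K i))
            + ∑ j ∈ Finset.univ.erase i, rank Indep (S ∪ K j) := by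
        rw [hsplit (fun j => rank Indep (S ∪ K' j))]
        congr 1
        · rw [hK'i, Finset.union_insert]
        · apply Finset.sum_congr rfl
          intro j hj
          rw [hK'j j (Finset.ne_of_mem_erase hj)]
      have hsplitK : ∑ j, rank Indep (S ∪ K j)
          = rank Indep (S ∪ K i) + ∑ j ∈ Finset.univ.erase i, rank Indep (S ∪ K j) :=
        hsplit (fun j => rank Indep (S ∪ K j))
      by_cases htight : ∑ j, rank Indep (S ∪ K j) ≤ S.card + sK
      · have hSD := hsub S hS htight
        have hstep : rank Indep (insert e (S ∪ K i)) = rank Indep (S ∪ K i) + 1 := by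
          by_contra hne
          have hle := rank_insert_le Indep hEmpty hDown e (S ∪ K i)
          have hge := rank_mono Indep (Finset.subset_insert e (S ∪ K i))
          have heq : rank Indep (insert e (S ∪ K i)) = rank Indep (S ∪ K i) := by omega
          have := rank_insert_eq_of_subset Indep hEmpty hDown hExch
            (Finset.union_subset_union hSD (Finset.Subset.refl (K i))) heq
          omega
        omega
      · have hge : rank Indep (S ∪ K i) ≤ rank Indep (insert e (S ∪ K i)) :=
          rank_mono Indep (Finset.subset_insert e (S ∪ K i))
        omega
    have hE'm : E'.card ≤ m := by
      have h1 : E'.card = E.card - 1 := Finset.card_erase_of_mem he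
      have h2 : 1 ≤ E.card := Finset.card_pos.mpr ⟨e, he⟩
      omega
    obtain ⟨P', hP'E, hP'ind, hP'd, hP'cov⟩ := ih E' K' hE'm hK'ind hK'd hE'K' hCond'
    -- assemble
    set P : Fin t → Finset (Fin n) := fun j => if j = i then insert e (P' i) else P' j
      with hPdef
    have hPi : P i = insert e (P' i) := by simp [hPdef]
    have hPj : ∀ j, j ≠ i → P j = P' j := fun j hj => by simp [hPdef, hj]
    have heP' : ∀ j, e ∉ P' j := fun j h => heE' (hP'E j h)
    refine ⟨P, ?_, ?_, ?_, ?_⟩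
    · intro j
      by_cases hj : j = i
      · rw [hj, hPi]
        exact Finset.insert_subset he ((hP'E i).trans hE'E)
      · rw [hPj j hj]; exact (hP'E j).trans hE'E
    · intro j
      by_cases hj : j = i
      · rw [hj, hPi]
        have heq : insert e (P' i) ∪ K i = P' i ∪ K' i := by
          rw [hK'i, Finset.insert_union, Finset.union_insert]
        rw [heq]; exact hP'ind i
      · rw [hPj j hj]
        have := hP'ind j; rwa [hK'j j hj] at this
    · intro j l hjl
      by_cases hj : j = i
      · have hl : l ≠ i := fun h => hjl (hj.trans h.symm)
        rw [hj, hPi, hPj l hl, Finset.disjoint_insert_left]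
        exact ⟨heP' l, hP'd i l (fun h => hl (h.symm ▸ rfl))⟩
      · by_cases hl : l = i
        · rw [hl, hPi, hPj j hj, Finset.disjoint_insert_right]
          exact ⟨heP' j, hP'd j i hj⟩
        · rw [hPj j hj, hPj l hl]; exact hP'd j l hjl
    · intro x hx
      by_cases hxe : x = e
      · apply Finset.mem_biUnion.mpr
        refine ⟨i, Finset.mem_univ i, ?_⟩
        rw [hPi, hxe]
        exact Finset.mem_insert_self e (P' i)
      · have hx' : x ∈ E' := Finset.mem_erase.mpr ⟨hxe, hx⟩
        obtain ⟨j, _, hxj⟩ := Finset.mem_biUnion.mp (hP'cov hx')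
        apply Finset.mem_biUnion.mpr
        refine ⟨j, Finset.mem_univ j, ?_⟩
        by_cases hj : j = i
        · rw [hj, hPi]
          exact Finset.mem_insert_of_mem (by rw [← hj]; exact hxj)
        · rw [hPj j hj]; exact hxj


/-- Matroid partition theorem (Edmonds 1965): the ground set `[n]` can be partitioned
into `t` pairwise disjoint independent sets iff `|S| ≤ t·rank(S)` for every `S ⊆ [n]`. -/
theorem stmt_12 {n : ℕ} (Indep : Finset (Fin n) → Prop)
    (hEmpty : Indep ∅)
    (hDown : ∀ A B : Finset (Fin n), A ⊆ B → Indep B → Indep A)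
    (hExch : ∀ A B : Finset (Fin n), Indep A → Indep B → A.card < B.card →
      ∃ x ∈ B, x ∉ A ∧ Indep (insert x A))
    (t : ℕ) :
    (∃ P : Fin t → Finset (Fin n),
        (∀ k, Indep (P k)) ∧
        (∀ k l, k ≠ l → Disjoint (P k) (P l)) ∧
        Finset.univ.biUnion P = Finset.univ) ↔
    ∀ S : Finset (Fin n), S.card ≤ t * rank Indep S := by
  constructor
  · rintro ⟨P, hPind, hPd, hPcov⟩ S
    have hS : S = Finset.univ.biUnion (fun k => S ∩ P k) := by
      ext x
      simp only [Finset.mem_biUnion, Finset.mem_inter, Finset.mem_univ, true_and]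
      constructor
      · intro hx
        have : x ∈ Finset.univ.biUnion P := by rw [hPcov]; exact Finset.mem_univ x
        obtain ⟨k, _, hk⟩ := Finset.mem_biUnion.mp this
        exact ⟨k, hx, hk⟩
      · rintro ⟨k, hk, _⟩; exact hk
    have hcard : S.card = ∑ k, (S ∩ P k).card := by
      conv_lhs => rw [hS]
      exact Finset.card_biUnion (fun k _ l _ hkl =>
        Finset.disjoint_of_subset_left Finset.inter_subset_right
          (Finset.disjoint_of_subset_right Finset.inter_subset_right (hPd k l hkl)))
    rw [hcard]
    calc ∑ k, (S ∩ P k).card ≤ ∑ _k : Fin t, rank Indep S :=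
          Finset.sum_le_sum (fun k _ => card_le_rank Indep
            (hDown _ _ Finset.inter_subset_right (hPind k)) Finset.inter_subset_left)
      _ = t * rank Indep S := by
          rw [Finset.sum_const, Finset.card_univ, Fintype.card_fin, smul_eq_mul]
  · intro hcond
    obtain ⟨P, hPE, hPind, hPd, hPcov⟩ := main_lemma Indep hEmpty hDown hExch t
      (Finset.univ.card) Finset.univ (fun _ => ∅) le_rfl (fun _ => hEmpty)
      (fun _ _ _ => Finset.disjoint_empty_right _)
      (fun _ => Finset.disjoint_empty_right _)
      (by
        intro S _
        simp only [Finset.union_empty, Finset.card_empty, Finset.sum_const,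
          Finset.card_univ, Fintype.card_fin, smul_eq_mul, Finset.sum_const_nat,
          add_zero]
        simpa using hcond S)
    refine ⟨P, ?_, hPd, ?_⟩
    · intro k
      have := hPind k
      rwa [Finset.union_empty] at this
    · exact Finset.Subset.antisymm (Finset.subset_univ _) hPcov
end

section
/- Consider n bidders with monotone valuations v_i : Sⁿ → ℝ≥0 (S a linearly ordered signal space with minimum 0) where each v_i is d-critical, and a matroid M on [n]. Fix a signal profile s. Let I* be the maximum-weight independent set chosen greedily under true values v_i(s) with a fixed tie-breaking rule, and let 𝒞 be the set of bidders i that are chosen by the greedy algorithm when run with the weight function w_i given by w_i(i) = v_i(s) and w_i(j) = v_j(s_{-i}, 0_i) for j ≠ i (same tie-breaking). Then I* ⊆ 𝒞. -/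
open Finset
open scoped Classical

variable {n : ℕ}

/-- The weight function used to decide whether bidder `i` is a candidate:
`i`'s own real value, and the shadow values (with `i`'s signal zeroed out) of the others. -/
noncomputable def wfun {n : ℕ} (v : Fin n → (Fin n → NNReal) → ℝ)
    (s : Fin n → NNReal) (i : Fin n) : Fin n → ℝ :=
  fun j => if j = i then v i s else v j (Function.update s i 0)

section Lemmas
variable (Indep : Finset (Fin n) → Prop)

lemma greedyAux_append (l1 l2 : List (Fin n)) (I : Finset (Fin n)) :
    greedyAux Indep (l1 ++ l2) I = greedyAux Indep l2 (greedyAux Indep l1 I) := by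
  induction l1 generalizing I with
  | nil => rfl
  | cons a l ih => simp only [List.cons_append, greedyAux, List.append_eq, ih]

lemma subset_greedyAux (l : List (Fin n)) (I : Finset (Fin n)) :
    I ⊆ greedyAux Indep l I := by
  induction l generalizing I with
  | nil => exact Finset.Subset.refl I
  | cons a l ih =>
    refine Finset.Subset.trans ?_ (ih _)
    split
    · exact Finset.subset_insert a I
    · exact Finset.Subset.refl I

lemma greedyAux_subset (l : List (Fin n)) (I : Finset (Fin n)) :
    greedyAux Indep l I ⊆ I ∪ l.toFinset := by
  induction l generalizing I with
  | nil => simp [greedyAux]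
  | cons a l ih =>
    intro x hx
    have h1 := ih (if Indep (insert a I) then insert a I else I) hx
    have h2 : (if Indep (insert a I) then insert a I else I) ⊆ insert a I := by
      split
      · exact Finset.Subset.refl _
      · exact Finset.subset_insert a I
    rcases Finset.mem_union.mp h1 with h | h
    · rcases Finset.mem_insert.mp (h2 h) with rfl | h
      · simp
      · simp [h]
    · simp [Finset.mem_union, h]

lemma indep_greedyAux (l : List (Fin n)) (I : Finset (Fin n)) (hI : Indep I) :
    Indep (greedyAux Indep l I) := by
  induction l generalizing I with
  | nil => exact hI
  | cons a l ih =>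
    simp only [greedyAux]
    split
    · exact ih _ (by assumption)
    · exact ih _ hI

lemma greedyAux_maximal (hDown : ∀ A B : Finset (Fin n), A ⊆ B → Indep B → Indep A)
    (l : List (Fin n)) (S : Finset (Fin n)) (I : Finset (Fin n))
    (hmax : ∀ x ∈ S, x ∉ I → ¬ Indep (insert x I)) :
    ∀ x, (x ∈ S ∨ x ∈ l) → x ∉ greedyAux Indep l I → ¬ Indep (insert x (greedyAux Indep l I)) := by
  induction l generalizing S I with
  | nil => intro x hx hxG; rcases hx with hx | hx
           · exact hmax x hx hxG
           · simp at hx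
  | cons a l ih =>
    simp only [greedyAux]
    intro x hx hxG
    have hmax' : ∀ y ∈ insert a S, y ∉ (if Indep (insert a I) then insert a I else I) →
        ¬ Indep (insert y (if Indep (insert a I) then insert a I else I)) := by
      intro y hy hyI'
      by_cases hA : Indep (insert a I)
      · rw [if_pos hA] at hyI' ⊢
        rcases Finset.mem_insert.mp hy with rfl | hyS
        · exact absurd (Finset.mem_insert_self y I) hyI'
        · intro hind
          have hyI : y ∉ I := fun h => hyI' (Finset.mem_insert_of_mem h)
          exact hmax y hyS hyI
            (hDown _ _ (Finset.insert_subset_insert y (Finset.subset_insert a I)) hind)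
      · rw [if_neg hA] at hyI' ⊢
        rcases Finset.mem_insert.mp hy with rfl | hyS
        · exact hA
        · exact hmax y hyS hyI'
    refine ih (insert a S) _ hmax' x ?_ hxG
    rcases hx with hx | hx
    · exact Or.inl (Finset.mem_insert_of_mem hx)
    · rcases List.mem_cons.mp hx with rfl | hx
      · exact Or.inl (Finset.mem_insert_self x S)
      · exact Or.inr hx

lemma card_le_of_maximal
    (hExch : ∀ A B : Finset (Fin n), Indep A → Indep B → A.card < B.card →
      ∃ x ∈ B, x ∉ A ∧ Indep (insert x A))
    {S B C : Finset (Fin n)} (hB : Indep B)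
    (hBmax : ∀ x ∈ S, x ∉ B → ¬Indep (insert x B)) (hC : Indep C) (hCS : C ⊆ S) :
    C.card ≤ B.card := by
  by_contra h
  obtain ⟨x, hxC, hxB, hind⟩ := hExch B C hB hC (lt_of_not_ge h)
  exact hBmax x (hCS hxC) hxB hind

lemma exists_maximal_ext {I S : Finset (Fin n)} (hI : Indep I) (hIS : I ⊆ S) :
    ∃ B, I ⊆ B ∧ B ⊆ S ∧ Indep B ∧ ∀ x ∈ S, x ∉ B → ¬Indep (insert x B) := by
  obtain ⟨B, hBmem, hBmax⟩ := Finset.exists_max_image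
    (S.powerset.filter (fun B => I ⊆ B ∧ Indep B)) Finset.card
    ⟨I, by simp [hI, hIS]⟩
  simp only [Finset.mem_filter, Finset.mem_powerset] at hBmem
  refine ⟨B, hBmem.2.1, hBmem.1, hBmem.2.2, ?_⟩
  intro x hxS hxB hind
  have hmem : insert x B ∈ S.powerset.filter (fun B => I ⊆ B ∧ Indep B) := by
    simp only [Finset.mem_filter, Finset.mem_powerset]
    exact ⟨Finset.insert_subset hxS hBmem.1,
      hBmem.2.1.trans (Finset.subset_insert x B), hind⟩
  have := hBmax _ hmem
  rw [Finset.card_insert_of_notMem hxB] at this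
  omega

lemma key_lemma
    (hDown : ∀ A B : Finset (Fin n), A ⊆ B → Indep B → Indep A)
    (hExch : ∀ A B : Finset (Fin n), Indep A → Indep B → A.card < B.card →
      ∃ x ∈ B, x ∉ A ∧ Indep (insert x A))
    {P P' B B' : Finset (Fin n)} {i : Fin n} (hiP : i ∉ P) (hP' : P' ⊆ P)
    (hB : Indep B) (hBP : B ⊆ P)
    (hBmax : ∀ x ∈ P, x ∉ B → ¬Indep (insert x B))
    (hiB : Indep (insert i B))
    (hB' : Indep B') (hB'P : B' ⊆ P') :
    Indep (insert i B') := by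
  obtain ⟨B'', h1, h2, h3, h4⟩ := exists_maximal_ext Indep hB' (hB'P.trans hP')
  have hcard : B''.card = B.card :=
    le_antisymm (card_le_of_maximal Indep hExch hB hBmax h3 h2)
      (card_le_of_maximal Indep hExch h3 h4 hB hBP)
  have hiBmem : i ∉ B := fun h => hiP (hBP h)
  have hlt : B''.card < (insert i B).card := by
    rw [Finset.card_insert_of_notMem hiBmem, hcard]; omega
  obtain ⟨y, hy, hyB'', hind⟩ := hExch B'' (insert i B) h3 hiB hlt
  rcases Finset.mem_insert.mp hy with rfl | hyB
  · exact hDown _ _ (Finset.insert_subset_insert y h1) hind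
  · exact absurd hind (h4 y (hBP hyB) hyB'')

lemma mem_greedyAux_split {i : Fin n} {l1 l2 : List (Fin n)}
    (hl1 : i ∉ l1) (hl2 : i ∉ l2) :
    i ∈ greedyAux Indep (l1 ++ i :: l2) ∅ ↔ Indep (insert i (greedyAux Indep l1 ∅)) := by
  rw [greedyAux_append]
  set G := greedyAux Indep l1 ∅ with hG
  simp only [greedyAux]
  constructor
  · intro h
    by_contra hni
    rw [if_neg hni] at h
    have h1 := greedyAux_subset Indep l2 G h
    have h2 : G ⊆ ∅ ∪ l1.toFinset := greedyAux_subset Indep l1 ∅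
    rcases Finset.mem_union.mp h1 with h | h
    · rcases Finset.mem_union.mp (h2 h) with h | h
      · simp at h
      · exact hl1 (List.mem_toFinset.mp h)
    · exact hl2 (List.mem_toFinset.mp h)
  · intro h
    rw [if_pos h]
    exact subset_greedyAux Indep l2 _ (Finset.mem_insert_self i G)

end Lemmas

/-- The linear order used for sorting. -/
def relP (w : Fin n → ℝ) (a b : Fin n) : Prop := w b < w a ∨ (w a = w b ∧ a ≤ b)

lemma relP_trans {w : Fin n → ℝ} {a b c : Fin n} (h1 : relP w a b) (h2 : relP w b c) :
    relP w a c := by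
  rcases h1 with h1 | ⟨e1, le1⟩ <;> rcases h2 with h2 | ⟨e2, le2⟩
  · exact Or.inl (h2.trans h1)
  · exact Or.inl (by rw [← e2]; exact h1)
  · exact Or.inl (by rw [e1]; exact h2)
  · exact Or.inr ⟨e1.trans e2, le1.trans le2⟩

lemma relP_total (w : Fin n → ℝ) (a b : Fin n) : relP w a b ∨ relP w b a := by
  rcases lt_trichotomy (w a) (w b) with h | h | h
  · exact Or.inr (Or.inl h)
  · rcases le_total a b with hab | hab
    · exact Or.inl (Or.inr ⟨h, hab⟩)
    · exact Or.inr (Or.inr ⟨h.symm, hab⟩)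
  · exact Or.inl (Or.inl h)

lemma relP_antisymm {w : Fin n → ℝ} {a b : Fin n} (h1 : relP w a b) (h2 : relP w b a) :
    a = b := by
  rcases h1 with h1 | ⟨e1, le1⟩ <;> rcases h2 with h2 | ⟨e2, le2⟩
  · exact absurd h1 (not_lt_of_gt h2)
  · exact absurd h1 (by rw [e2]; exact lt_irrefl _)
  · exact absurd h2 (by rw [e1]; exact lt_irrefl _)
  · exact le_antisymm le1 le2

lemma sortedList_perm (w : Fin n → ℝ) : (sortedList n w).Perm (List.finRange n) :=
  List.mergeSort_perm _ _

lemma sortedList_nodup (w : Fin n → ℝ) : (sortedList n w).Nodup :=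
  ((sortedList_perm w).nodup_iff).mpr (List.nodup_finRange n)

lemma sortedList_mem (w : Fin n → ℝ) (x : Fin n) : x ∈ sortedList n w :=
  (sortedList_perm w).mem_iff.mpr (List.mem_finRange x)

lemma sortedList_pairwise (w : Fin n → ℝ) :
    (sortedList n w).Pairwise (relP w) := by
  have h := List.pairwise_mergeSort
    (le := fun a b : Fin n => decide (w b < w a ∨ (w a = w b ∧ a ≤ b)))
    (fun a b c hab hbc => by
      simp only [decide_eq_true_eq] at *
      exact relP_trans hab hbc)
    (fun a b => by
      simp only [Bool.or_eq_true, decide_eq_true_eq]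
      exact relP_total w a b)
    (List.finRange n)
  refine h.imp ?_
  intro a b hab
  simpa only [decide_eq_true_eq, relP] using hab


/-- Every bidder in the welfare-maximizing greedy set `I*` (under true values) is a
candidate, i.e. is also selected by the greedy algorithm run with her own real value
and the others' shadow values. -/
theorem stmt_14 {n : ℕ} (Indep : Finset (Fin n) → Prop)
    (hEmpty : Indep ∅)
    (hDown : ∀ A B : Finset (Fin n), A ⊆ B → Indep B → Indep A)
    (hExch : ∀ A B : Finset (Fin n), Indep A → Indep B → A.card < B.card →
      ∃ x ∈ B, x ∉ A ∧ Indep (insert x A))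
    (d : ℕ) (v : Fin n → (Fin n → NNReal) → ℝ)
    (hmono : ∀ i, Monotone (v i))
    (hnonneg : ∀ i t, 0 ≤ v i t)
    (hcrit : ∀ (j : Fin n) (t : Fin n → NNReal),
      (Finset.univ.filter fun k => v j (Function.update t k 0) < v j t).card ≤ d)
    (s : Fin n → NNReal) :
    ∀ i ∈ greedy Indep (fun j => v j s), i ∈ greedy Indep (wfun v s i) := by
  intro i hi
  set w : Fin n → ℝ := fun j => v j s with hw
  set w' : Fin n → ℝ := wfun v s i with hw'
  have hwi : w' i = w i := by simp [hw', hw, wfun]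
  have hle : ∀ j, w' j ≤ w j := by
    intro j
    by_cases hj : j = i
    · subst hj; exact le_of_eq hwi
    · simp only [hw', hw, wfun, if_neg hj]
      refine hmono j (fun k => ?_)
      rcases eq_or_ne k i with rfl | hk
      · simp
      · simp [Function.update_of_ne hk]
  obtain ⟨l1, l2, hsplit⟩ := List.append_of_mem (sortedList_mem w i)
  obtain ⟨l1', l2', hsplit'⟩ := List.append_of_mem (sortedList_mem w' i)
  -- nodup facts
  have hnd := sortedList_nodup w
  rw [hsplit, List.nodup_append] at hnd
  obtain ⟨hnd1, hnd2, hdisj⟩ := hnd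
  have hi2 : i ∉ l2 := (List.nodup_cons.mp hnd2).1
  have hi1 : i ∉ l1 := fun h => hdisj i h i List.mem_cons_self rfl
  have hnd' := sortedList_nodup w'
  rw [hsplit', List.nodup_append] at hnd'
  obtain ⟨hnd1', hnd2', hdisj'⟩ := hnd'
  have hi2' : i ∉ l2' := (List.nodup_cons.mp hnd2').1
  have hi1' : i ∉ l1' := fun h => hdisj' i h i List.mem_cons_self rfl
  -- sortedness facts
  have hp := sortedList_pairwise w
  rw [hsplit, List.pairwise_append] at hp
  obtain ⟨hp1, hp2, hrel⟩ := hp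
  have hrel2 : ∀ j ∈ l2, relP w i j := (List.pairwise_cons.mp hp2).1
  have hp' := sortedList_pairwise w'
  rw [hsplit', List.pairwise_append] at hp'
  obtain ⟨hp1', hp2', hrel'⟩ := hp'
  -- predecessor set inclusion
  have hP' : l1'.toFinset ⊆ l1.toFinset := by
    intro j hj
    rw [List.mem_toFinset] at hj ⊢
    have hji : j ≠ i := fun h => hi1' (h ▸ hj)
    have hr' : relP w' j i := hrel' j hj i List.mem_cons_self
    have hr : relP w j i := by
      rcases hr' with h | ⟨e, le'⟩
      · exact Or.inl (lt_of_lt_of_le (hwi ▸ h) (hle j))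
      · have h1 : w i ≤ w j := by
          calc w i = w' i := hwi.symm
          _ = w' j := e.symm
          _ ≤ w j := hle j
        rcases lt_or_eq_of_le h1 with h2 | h2
        · exact Or.inl h2
        · exact Or.inr ⟨h2.symm, le'⟩
    have hjl : j ∈ l1 ++ i :: l2 := by rw [← hsplit]; exact sortedList_mem w j
    rcases List.mem_append.mp hjl with h | h
    · exact h
    · rcases List.mem_cons.mp h with rfl | h
      · exact absurd rfl hji
      · exact absurd (relP_antisymm hr (hrel2 j h)) hji
  -- greedy prefix sets
  set G := greedyAux Indep l1 ∅ with hGdef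
  set G' := greedyAux Indep l1' ∅ with hG'def
  have hiG : Indep (insert i G) := by
    rw [greedy, hsplit] at hi
    exact (mem_greedyAux_split Indep hi1 hi2).mp hi
  have hG : Indep G := indep_greedyAux Indep l1 ∅ hEmpty
  have hGsub : G ⊆ l1.toFinset := by
    have := greedyAux_subset Indep l1 ∅
    simpa using this
  have hGmax : ∀ x ∈ l1.toFinset, x ∉ G → ¬Indep (insert x G) := by
    intro x hx hxG
    exact greedyAux_maximal Indep hDown l1 ∅ ∅ (by simp) x
      (Or.inr (List.mem_toFinset.mp hx)) hxG
  have hG' : Indep G' := indep_greedyAux Indep l1' ∅ hEmpty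
  have hG'sub : G' ⊆ l1'.toFinset := by
    have := greedyAux_subset Indep l1' ∅
    simpa using this
  have hiP : i ∉ l1.toFinset := fun h => hi1 (List.mem_toFinset.mp h)
  have hkey : Indep (insert i G') :=
    key_lemma Indep hDown hExch hiP hP' hG hGsub hGmax hiG hG' hG'sub
  rw [greedy, hsplit']
  exact (mem_greedyAux_split Indep hi1' hi2').mpr hkey
end
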